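/- If S ⊆ [1..n] is a suffixient set for w, then |S| ≥ number of super-maximal right extensions ending with distinct final-character/context classes; formally: for every suffixient set S of w and every super-maximal right extension x ∈ SRE(w), there exists j ∈ S with x a suffix of w[1..j], and no single j ∈ S can serve two distinct super-maximal right extensions; hence |S| ≥ |SRE(w)| = χ(w). -/

import Mathlib

/-- `u` occurs in `w` starting at 1-indexed position `i`. -/
def occursAt {α : Type*} (w u : List α) (i : ℕ) : Prop :=
  1 ≤ i ∧ i + u.length ≤ w.length + 1 ∧ (w.drop (i - 1)).take u.length = u

/-- `u` is a right extension in `w`: `u = x ++ [c]`, both `x++[c]` and `x++[c']`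
occur in `w` for some `c' ≠ c`. -/
def RightExt {α : Type*} (w u : List α) : Prop :=
  ∃ (x : List α) (c c' : α), c ≠ c' ∧ u = x ++ [c] ∧
    (x ++ [c]) <:+: w ∧ (x ++ [c']) <:+: w

/-- super-maximal right extension: not a proper suffix of another right extension. -/
def SupMaxExt {α : Type*} (w u : List α) : Prop :=
  RightExt w u ∧ ∀ v, RightExt w v → u <:+ v → u = v

def SRE {α : Type*} (w : List α) : Set (List α) := {u | SupMaxExt w u}

noncomputable def chi {α : Type*} (w : List α) : ℕ := (SRE w).ncard

/-- `w` ends with a character that occurs nowhere else. -/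
def UniqueTerm {α : Type*} (w : List α) : Prop :=
  ∃ (v : List α) (d : α), w = v ++ [d] ∧ d ∉ v

/-- substring equation system -/
structure SES (α : Type*) where
  n : ℕ
  Eqs : Finset (ℕ × ℕ × ℕ)
  Ch : Finset (ℕ × α)

def SES.valid {α : Type*} (E : SES α) : Prop :=
  (∀ e ∈ E.Eqs, 1 ≤ e.1 ∧ 1 ≤ e.2.1 ∧ 1 ≤ e.2.2 ∧
      e.1 + e.2.2 ≤ E.n + 1 ∧ e.2.1 + e.2.2 ≤ E.n + 1) ∧
  (∀ kc ∈ E.Ch, 1 ≤ kc.1 ∧ kc.1 ≤ E.n)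

def SES.sat {α : Type*} (E : SES α) (w : List α) : Prop :=
  w.length = E.n ∧
  (∀ e ∈ E.Eqs, (w.drop (e.1 - 1)).take e.2.2 = (w.drop (e.2.1 - 1)).take e.2.2) ∧
  (∀ kc ∈ E.Ch, w[kc.1 - 1]? = some kc.2)

def SES.represents {α : Type*} (E : SES α) (w : List α) : Prop :=
  E.sat w ∧ ∀ w' : List α, E.sat w' → w' = w

def SES.size {α : Type*} (E : SES α) : ℕ := E.Eqs.card + E.Ch.card

/-- minimum size of a valid SES representing `w` -/
noncomputable def sVal {α : Type*} (w : List α) : ℕ :=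
  sInf {k | ∃ E : SES α, E.valid ∧ E.represents w ∧ E.size = k}

/-- bidirectional macro scheme machinery -/
def phraseLen {α : Type*} : α ⊕ (ℕ × ℕ) → ℕ
  | Sum.inl _ => 1
  | Sum.inr (_, ℓ) => ℓ

def startPos {α : Type*} (ph : List (α ⊕ (ℕ × ℕ))) (t : ℕ) : ℕ :=
  1 + ((ph.take t).map phraseLen).sum

/-- the phrase list `ph` is a (content-correct) macro scheme for `w` -/
def BMSFor {α : Type*} (w : List α) (ph : List (α ⊕ (ℕ × ℕ))) : Prop :=
  (ph.map phraseLen).sum = w.length ∧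
  ∀ t (h : t < ph.length),
    match ph.get ⟨t, h⟩ with
    | Sum.inl c => w[startPos ph t - 1]? = some c
    | Sum.inr (p, ℓ) => 1 ≤ ℓ ∧ 1 ≤ p ∧ p + ℓ ≤ w.length + 1 ∧
        (w.drop (startPos ph t - 1)).take ℓ = (w.drop (p - 1)).take ℓ

/-- the transition function τ (on 0-based offsets) -/
def tauAux {α : Type*} : List (α ⊕ (ℕ × ℕ)) → ℕ → Option ℕ
  | [], _ => none
  | (Sum.inl _) :: rest, i => if i = 0 then none else tauAux rest (i - 1)
  | (Sum.inr (p, ℓ)) :: rest, i => if i < ℓ then some (p + i) else tauAux rest (i - ℓ)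

/-- τ on 1-indexed positions -/
def tauStep {α : Type*} (ph : List (α ⊕ (ℕ × ℕ))) (i : ℕ) : Option ℕ :=
  tauAux ph (i - 1)

/-- validity: every position reaches ⊥ after finitely many steps -/
def BMSValid {α : Type*} (ph : List (α ⊕ (ℕ × ℕ))) (n : ℕ) : Prop :=
  ∀ i, 1 ≤ i → i ≤ n →
    ∃ k, (fun o : Option ℕ => o.bind (tauStep ph))^[k] (some i) = none

noncomputable def bVal {α : Type*} (w : List α) : ℕ :=
  sInf {k | ∃ ph : List (α ⊕ (ℕ × ℕ)),
      BMSFor w ph ∧ BMSValid ph w.length ∧ ph.length = k}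

/-- string attractor -/
def IsAttractor {α : Type*} (w : List α) (Γ : Finset ℕ) : Prop :=
  (∀ p ∈ Γ, 1 ≤ p ∧ p ≤ w.length) ∧
  ∀ u : List α, u ≠ [] → u <:+: w →
    ∃ i, occursAt w u i ∧ ∃ p ∈ Γ, i ≤ p ∧ p ≤ i + u.length - 1

noncomputable def gammaVal {α : Type*} (w : List α) : ℕ :=
  sInf {k | ∃ Γ : Finset ℕ, IsAttractor w Γ ∧ Γ.card = k}

/-- Thue–Morse words over Bool (`false` = a, `true` = b) -/
def tm : ℕ → List Bool
  | 0 => [false]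
  | n + 1 => (tm n).flatMap (fun b => [b, !b])

/-- leftmost occurrence -/
def leftmostOcc {α : Type*} (w v : List α) (i : ℕ) : Prop :=
  occursAt w v i ∧ ∀ i', occursAt w v i' → i ≤ i'

/-- generating pairs of the equivalence `≡_χ` -/
def GenPair {α : Type*} (w : List α) (j j' : ℕ) : Prop :=
  ∃ (y z x : List α) (c c' : α) (i i' : ℕ),
    x ≠ [] ∧
    SupMaxExt w (y ++ x ++ [c]) ∧ SupMaxExt w (z ++ x ++ [c']) ∧
    (y = [] ∨ z = [] ∨ y.getLast? ≠ z.getLast?) ∧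
    leftmostOcc w (y ++ x ++ [c]) i ∧ leftmostOcc w (z ++ x ++ [c']) i' ∧
    ∃ k < x.length, j = i + y.length + k ∧ j' = i' + z.length + k

def chiEquiv {α : Type*} (w : List α) : ℕ → ℕ → Prop := Relation.EqvGen (GenPair w)
/-- `S` is a suffixient set for `w`. -/
def Suffixient {α : Type*} (w : List α) (S : Finset ℕ) : Prop :=
  ∀ u : List α, RightExt w u → ∃ j ∈ S, u <:+ w.take j

theorem stmt18 {α : Type*} (w : List α) (hterm : UniqueTerm w)
    (S : Finset ℕ) (hS : Suffixient w S) :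
    (∀ x ∈ SRE w, ∃ j ∈ S, x <:+ w.take j) ∧
    (∀ j ∈ S, ∀ x ∈ SRE w, ∀ x' ∈ SRE w,
      x <:+ w.take j → x' <:+ w.take j → x = x') ∧
    chi w ≤ S.card := by
  classical
  have h1 : ∀ x ∈ SRE w, ∃ j ∈ S, x <:+ w.take j := by
    intro x hx
    exact hS x hx.1
  have h2 : ∀ j ∈ S, ∀ x ∈ SRE w, ∀ x' ∈ SRE w,
      x <:+ w.take j → x' <:+ w.take j → x = x' := by
    intro j _ x hx x' hx' hsx hsx'
    rcases List.suffix_or_suffix_of_suffix hsx hsx' with h | h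
    · exact hx.2 x' hx'.1 h
    · exact (hx'.2 x hx.1 h).symm
  refine ⟨h1, h2, ?_⟩
  have hf : ∀ x ∈ SRE w, ∃ j, j ∈ S ∧ x <:+ w.take j := by
    intro x hx
    obtain ⟨j, hj, hs⟩ := h1 x hx
    exact ⟨j, hj, hs⟩
  choose f hf1 hf2 using hf
  set g : List α → ℕ := fun x => if hx : x ∈ SRE w then f x hx else 0 with hg
  have hinj : Set.InjOn g (SRE w) := by
    intro x hx x' hx' heq
    simp only [hg, dif_pos hx, dif_pos hx'] at heq
    exact h2 (f x' hx') (hf1 x' hx') x hx x' hx'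
      (heq ▸ hf2 x hx) (hf2 x' hx')
  have hsub : g '' SRE w ⊆ (S : Set ℕ) := by
    rintro _ ⟨x, hx, rfl⟩
    simp only [hg, dif_pos hx]
    exact hf1 x hx
  calc chi w = (g '' SRE w).ncard := (Set.ncard_image_of_injOn hinj).symm
    _ ≤ (S : Set ℕ).ncard := Set.ncard_le_ncard hsub S.finite_toSet
    _ = S.card := Set.ncard_coe_finset S
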